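/- Let β ∈ (0, 1/2) with β ≠ 1/3 and set c = cos(2πβ). Then a(β) ∈ (0, π/2), and for every n ∈ ℕ and every ω ∈ [nπ/L, (n+1)π/L] one has g_β(ω) < −2 if and only if ω ∈ Ĩⁿ(β). Moreover ωₙ* = (2n+1)π/(2L) belongs to Ĩⁿ(β). -/

import Mathlib

open Real

noncomputable def L : ℝ := 1 / Real.sqrt 3

noncomputable def g (β ω : ℝ) : ℝ :=
  (9 * Real.cos (ω * L) ^ 2 - 3 - 2 * Real.cos (2 * π * β)) /
    Real.sqrt (2 + 2 * Real.cos (2 * π * β))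

noncomputable def aβ (β : ℝ) : ℝ :=
  Real.arccos (Real.sqrt (3 + 2 * Real.cos (2 * π * β) -
    2 * Real.sqrt (2 + 2 * Real.cos (2 * π * β))) / 3)

noncomputable def Itilde (β : ℝ) (n : ℕ) : Set ℝ :=
  Set.Ioo (n * π / L + aβ β / L) ((n + 1) * π / L - aβ β / L)

lemma cos_lt_cos_iff_on_Icc {a y : ℝ} (ha0 : 0 ≤ a) (hap : a ≤ π)
    (hy0 : 0 ≤ y) (hyp : y ≤ π) : Real.cos y < Real.cos a ↔ a < y := by
  constructor
  · intro h
    by_contra hn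
    push_neg at hn
    rcases eq_or_lt_of_le hn with he | hl
    · rw [he] at h; exact lt_irrefl _ h
    · exact absurd (Real.strictAntiOn_cos ⟨hy0, hyp⟩ ⟨ha0, hap⟩ hl) (by linarith)
  · intro h
    exact Real.strictAntiOn_cos ⟨ha0, hap⟩ ⟨hy0, hyp⟩ h

lemma abs_cos_lt_iff {a y : ℝ} (ha : 0 < a) (ha2 : a < π / 2)
    (hy0 : 0 ≤ y) (hyp : y ≤ π) :
    |Real.cos y| < Real.cos a ↔ a < y ∧ y < π - a := by
  have hπ := Real.pi_pos
  rcases le_or_gt y (π / 2) with hc | hc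
  · rw [abs_of_nonneg (Real.cos_nonneg_of_mem_Icc ⟨by linarith, hc⟩)]
    rw [cos_lt_cos_iff_on_Icc ha.le (by linarith) hy0 hyp]
    constructor
    · intro h; exact ⟨h, by linarith⟩
    · rintro ⟨h, _⟩; exact h
  · rw [abs_of_nonpos (Real.cos_nonpos_of_pi_div_two_le_of_le hc.le (by linarith))]
    have h1 : -Real.cos y = Real.cos (π - y) := by rw [Real.cos_pi_sub]
    rw [h1, cos_lt_cos_iff_on_Icc ha.le (by linarith) (by linarith) (by linarith)]
    constructor
    · intro h; exact ⟨by linarith, by linarith⟩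
    · rintro ⟨_, h⟩; exact by linarith

lemma abs_cos_add_nat_mul_pi (y : ℝ) (n : ℕ) :
    |Real.cos (y + n * π)| = |Real.cos y| := by
  induction n with
  | zero => simp
  | succ k ih =>
    have h : y + ((k : ℝ) + 1) * π = (y + k * π) + π := by ring
    rw [Nat.cast_succ, h, Real.cos_add_pi, abs_neg, ih]

theorem stmt_9 (β : ℝ) (hβ0 : 0 < β) (hβ1 : β < 1 / 2) (hβ3 : β ≠ 1 / 3) (n : ℕ) :
    aβ β ∈ Set.Ioo 0 (π / 2) ∧
    (∀ ω ∈ Set.Icc (n * π / L) ((n + 1) * π / L), (g β ω < -2 ↔ ω ∈ Itilde β n)) ∧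
    (2 * n + 1) * π / (2 * L) ∈ Itilde β n := by
  have hπ := Real.pi_pos
  set c := Real.cos (2 * π * β) with hc_def
  have hmem : 2 * π * β ∈ Set.Icc (0:ℝ) π := by
    constructor <;> nlinarith
  have hc1 : -1 < c := by
    have := Real.strictAntiOn_cos hmem ⟨le_refl π |>.trans (le_refl π) |>.trans' hπ.le, le_refl π⟩
      (by nlinarith)
    rw [Real.cos_pi] at this; exact this
  have hc2 : c < 1 := by
    have := Real.strictAntiOn_cos ⟨le_refl 0, hπ.le⟩ hmem (by nlinarith)
    rw [Real.cos_zero] at this; exact this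
  have hcne : c ≠ -(1/2) := by
    intro h
    have h23 : Real.cos (2 * π / 3) = -(1/2) := by
      have he : 2 * π / 3 = π - π / 3 := by ring
      rw [he, Real.cos_pi_sub, Real.cos_pi_div_three]
    have hmem2 : 2 * π / 3 ∈ Set.Icc (0:ℝ) π := ⟨by linarith, by linarith⟩
    have := Real.injOn_cos hmem hmem2 (by rw [← hc_def, h, h23])
    apply hβ3
    field_simp at this
    nlinarith
  set s := Real.sqrt (2 + 2 * c) with hs_def
  have hpos : (0:ℝ) < 2 + 2 * c := by linarith
  have hs0 : 0 < s := Real.sqrt_pos.mpr hpos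
  have hssq : s ^ 2 = 2 + 2 * c := Real.sq_sqrt hpos.le
  have hs2 : s < 2 := by nlinarith
  have hsne : s ≠ 1 := by
    intro h
    rw [h] at hssq
    apply hcne; nlinarith
  have hsq_eq : 3 + 2 * c - 2 * s = (s - 1) ^ 2 := by nlinarith
  have ha_eq : aβ β = Real.arccos (|s - 1| / 3) := by
    rw [aβ, ← hc_def, ← hs_def, hsq_eq, Real.sqrt_sq_eq_abs]
  set d := |s - 1| / 3 with hd_def
  have habs1 : |s - 1| < 1 := abs_lt.mpr ⟨by linarith, by linarith⟩
  have hd0 : 0 < d := by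
    have : 0 < |s - 1| := abs_pos.mpr (sub_ne_zero.mpr hsne)
    positivity
  have hd1 : d < 1 := by rw [hd_def]; linarith [habs1]
  have ha0 : 0 < aβ β := by rw [ha_eq]; exact Real.arccos_pos.mpr hd1
  have ha2 : aβ β < π / 2 := by rw [ha_eq]; exact Real.arccos_lt_pi_div_two.mpr hd0
  have hcos_a : Real.cos (aβ β) = d := by
    rw [ha_eq]; exact Real.cos_arccos (by linarith) (by linarith)
  have hL : 0 < L := by
    rw [L]; positivity
  refine ⟨⟨ha0, ha2⟩, ?_, ?_⟩
  · intro ω hω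
    obtain ⟨hω1, hω2⟩ := hω
    have hx1 : (n : ℝ) * π ≤ ω * L := by
      rw [div_le_iff₀ hL] at hω1; linarith [hω1]
    have hx2 : ω * L ≤ ((n : ℝ) + 1) * π := by
      rw [le_div_iff₀ hL] at hω2; linarith [hω2]
    have hg : g β ω < -2 ↔ |Real.cos (ω * L)| < Real.cos (aβ β) := by
      have hca : 0 < Real.cos (aβ β) := by rw [hcos_a]; exact hd0
      rw [g, ← hc_def, ← hs_def, div_lt_iff₀ hs0]
      have h9 : (9 * Real.cos (ω * L) ^ 2 - 3 - 2 * c < -2 * s) ↔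
          Real.cos (ω * L) ^ 2 < Real.cos (aβ β) ^ 2 := by
        rw [hcos_a, hd_def, div_pow, sq_abs]
        constructor <;> intro h <;> nlinarith
      rw [h9, sq_lt_sq, abs_of_pos hca]
    have hitilde : ω ∈ Itilde β n ↔
        (n : ℝ) * π + aβ β < ω * L ∧ ω * L < ((n : ℝ) + 1) * π - aβ β := by
      rw [Itilde, Set.mem_Ioo, ← add_div, div_sub_div_same, div_lt_iff₀ hL,
        lt_div_iff₀ hL]
    rw [hg, hitilde]
    have hy : ω * L = (ω * L - n * π) + n * π := by ring
    rw [hy, abs_cos_add_nat_mul_pi,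
      abs_cos_lt_iff ha0 ha2 (by linarith) (by linarith)]
    constructor <;> rintro ⟨h1, h2⟩ <;> exact ⟨by linarith, by linarith⟩
  · rw [Itilde, Set.mem_Ioo, ← add_div, div_sub_div_same, div_lt_iff₀ hL,
      lt_div_iff₀ hL]
    have hLne : L ≠ 0 := hL.ne'
    have he : (2 * (n : ℝ) + 1) * π / (2 * L) * L = (n : ℝ) * π + π / 2 := by
      field_simp
    rw [he]
    exact ⟨by linarith, by linarith⟩
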